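/- (Reference triangle integral for the cubic PHS) For α, β > 0, ∫_0^α ∫_0^{(β/α)x} ‖(x,y)‖₂³ dy dx = (α/40) [3α⁴ · arcsinh(β/α) + β(5α² + 2β²)√(α² + β²)]. -/

import Mathlib

open MeasureTheory

lemma phs_antideriv (t : ℝ) :
    HasDerivAt (fun t : ℝ => t * (1 + t ^ 2) * Real.sqrt (1 + t ^ 2) / 4
      + 3 / 8 * (t * Real.sqrt (1 + t ^ 2) + Real.arsinh t))
      (Real.sqrt (1 + t ^ 2) ^ 3) t := by
  have hpos : (0:ℝ) < 1 + t ^ 2 := by positivity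
  have h1 : HasDerivAt (fun t : ℝ => 1 + t ^ 2) (2 * t) t := by
    simpa using ((hasDerivAt_pow 2 t).const_add 1)
  have hs : HasDerivAt (fun t : ℝ => Real.sqrt (1 + t ^ 2))
      (2 * t / (2 * Real.sqrt (1 + t ^ 2))) t := h1.sqrt hpos.ne'
  have h2 : HasDerivAt (fun t : ℝ => t * (1 + t ^ 2))
      (1 * (1 + t ^ 2) + t * (2 * t)) t := (hasDerivAt_id t).mul h1
  have h3 := (h2.mul hs).div_const 4
  have h4 : HasDerivAt (fun t : ℝ => t * Real.sqrt (1 + t ^ 2))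
      (1 * Real.sqrt (1 + t ^ 2) + t * (2 * t / (2 * Real.sqrt (1 + t ^ 2)))) t :=
    (hasDerivAt_id t).mul hs
  have h5 := ((h4.add (Real.hasDerivAt_arsinh t)).const_mul (3/8 : ℝ))
  have h := h3.add h5
  refine h.congr_deriv ?_
  symm
  set s := Real.sqrt (1 + t ^ 2) with hsdef
  have hsp : (0:ℝ) < s := Real.sqrt_pos.2 hpos
  have hsq : s ^ 2 = 1 + t ^ 2 := Real.sq_sqrt hpos.le
  field_simp
  ring_nf
  linear_combination (32*s^2 + 12 + 8*t^2) * hsq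

lemma phs_I (k : ℝ) :
    (∫ t in (0:ℝ)..k, Real.sqrt (1 + t ^ 2) ^ 3)
      = k * (1 + k ^ 2) * Real.sqrt (1 + k ^ 2) / 4
        + 3 / 8 * (k * Real.sqrt (1 + k ^ 2) + Real.arsinh k) := by
  have := intervalIntegral.integral_eq_sub_of_hasDerivAt
    (f := fun t : ℝ => t * (1 + t ^ 2) * Real.sqrt (1 + t ^ 2) / 4
      + 3 / 8 * (t * Real.sqrt (1 + t ^ 2) + Real.arsinh t))
    (fun t _ => phs_antideriv t)
    (Continuous.intervalIntegrable (by continuity) 0 k)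
  simpa [Real.arsinh_zero] using this

/-- Reference triangle integral for the cubic PHS:
`∫₀^α ∫₀^{(β/α)x} ‖(x,y)‖₂³ dy dx
  = (α/40)[3α⁴ arcsinh(β/α) + β(5α² + 2β²)√(α² + β²)]`. -/
theorem cubic_phs_reference_triangle (α β : ℝ) (hα : 0 < α) (hβ : 0 < β) :
    (∫ x in (0:ℝ)..α, ∫ y in (0:ℝ)..(β / α * x), Real.sqrt (x ^ 2 + y ^ 2) ^ 3) =
      α / 40 * (3 * α ^ 4 * Real.arsinh (β / α)
        + β * (5 * α ^ 2 + 2 * β ^ 2) * Real.sqrt (α ^ 2 + β ^ 2)) := by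
  set k := β / α with hk
  set I : ℝ := k * (1 + k ^ 2) * Real.sqrt (1 + k ^ 2) / 4
        + 3 / 8 * (k * Real.sqrt (1 + k ^ 2) + Real.arsinh k) with hI
  have hinner : ∀ x ∈ Set.uIcc (0:ℝ) α,
      (∫ y in (0:ℝ)..(β / α * x), Real.sqrt (x ^ 2 + y ^ 2) ^ 3) = I * x ^ 4 := by
    intro x hx
    have hx0 : 0 ≤ x := by
      rcases Set.mem_uIcc.1 hx with h | h
      · exact h.1
      · linarith [h.1, hα.le]
    have hsub : (∫ y in (0:ℝ)..(x * k), Real.sqrt (x ^ 2 + y ^ 2) ^ 3)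
        = x • ∫ t in (0:ℝ)..k, Real.sqrt (x ^ 2 + (x * t) ^ 2) ^ 3 := by
      rw [intervalIntegral.smul_integral_comp_mul_left
        (f := fun y => Real.sqrt (x ^ 2 + y ^ 2) ^ 3) (c := x)]
      ring_nf
    rw [show β / α * x = x * k from mul_comm _ _, hsub]
    have heq : ∀ t : ℝ, Real.sqrt (x ^ 2 + (x * t) ^ 2) ^ 3
        = x ^ 3 * Real.sqrt (1 + t ^ 2) ^ 3 := by
      intro t
      have : x ^ 2 + (x * t) ^ 2 = x ^ 2 * (1 + t ^ 2) := by ring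
      rw [this, Real.sqrt_mul (by positivity), Real.sqrt_sq hx0]
      ring
    simp only [heq]
    rw [intervalIntegral.integral_const_mul, phs_I k, ← hI]
    simp only [smul_eq_mul]; ring
  rw [intervalIntegral.integral_congr hinner]
  rw [intervalIntegral.integral_const_mul, integral_pow]
  have hs2 : Real.sqrt (1 + k ^ 2) = Real.sqrt (α ^ 2 + β ^ 2) / α := by
    rw [hk, show (1 : ℝ) + (β / α) ^ 2 = (α ^ 2 + β ^ 2) / α ^ 2 by
      field_simp, Real.sqrt_div (by positivity), Real.sqrt_sq hα.le]
  rw [hI, hs2, hk]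
  have hsnn : (0:ℝ) ≤ Real.sqrt (α ^ 2 + β ^ 2) := Real.sqrt_nonneg _
  field_simp
  ring
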